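/- If S ⊆ ℕ^ℕ is guessable, then S_∞ = ∅, i.e., there exists an ordinal α with S_α = ∅. -/

import Mathlib

open Filter Topology Classical

/-- The initial segment `f↾n` of an infinite sequence. -/
def res (f : ℕ → ℕ) (n : ℕ) : List ℕ := List.ofFn (fun i : Fin n => f i)

/-- `[X]`: the set of infinite sequences all of whose finite initial segments lie in `X`. -/
def seqsIn (X : Set (List ℕ)) : Set (ℕ → ℕ) := {f | ∀ n, res f n ∈ X}

/-- The simplified remainder `S_α`. -/
noncomputable def SRem (S : Set (ℕ → ℕ)) (α : Ordinal.{0}) : Set (List ℕ) :=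
  Ordinal.limitRecOn α Set.univ
    (fun _ prev => {x | x ∈ prev ∧ ∃ f g : ℕ → ℕ,
      f ∈ seqsIn prev ∧ g ∈ seqsIn prev ∧ res f x.length = x ∧ res g x.length = x ∧
      f ∈ S ∧ g ∉ S})
    (fun _ _ ih => ⋂ (β : Ordinal.{0}) (h : β < _), ih β h)

/-- Wadge's remainder `Rm_μ(A,B)`. -/
noncomputable def Rm (A B : Set (ℕ → ℕ)) (μ : Ordinal.{0}) : Set (ℕ → ℕ) :=
  if μ = 0 then Set.univ
  else ⋂ (ν : {ν : Ordinal.{0} // ν < μ}),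
    closure (Rm A B ν.1 ∩ A) ∩ closure (Rm A B ν.1 ∩ B)
termination_by μ
decreasing_by exact ν.2

/-- The least ordinal at which the simplified remainders stabilize. -/
noncomputable def alphaS (S : Set (ℕ → ℕ)) : Ordinal.{0} :=
  sInf {α | SRem S α = SRem S (α + 1)}

/-- `S_∞`, the stable value of the simplified remainders. -/
noncomputable def Sinf (S : Set (ℕ → ℕ)) : Set (List ℕ) := SRem S (alphaS S)

/-- `β(σ)`: the least ordinal `γ` with `σ ∉ S_γ`. -/
noncomputable def betaOf (S : Set (ℕ → ℕ)) (σ : List ℕ) : Ordinal.{0} :=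
  sInf {γ | σ ∉ SRem S γ}

/-- `G` guesses `S`. -/
def Guesses (G : List ℕ → Bool) (S : Set (ℕ → ℕ)) : Prop :=
  ∀ f : ℕ → ℕ, ∀ᶠ n in atTop, (G (res f n) = true ↔ f ∈ S)

def Guessable (S : Set (ℕ → ℕ)) : Prop := ∃ G, Guesses G S

/-- `G, H` witness that `S` is guessable with `< α` mind changes. -/
def WitnessMC (S : Set (ℕ → ℕ)) (α : Ordinal.{0}) (G : List ℕ → Bool)
    (H : List ℕ → Ordinal.{0}) : Prop :=
  Guesses G S ∧ (∀ σ, H σ < α) ∧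
  (∀ (f : ℕ → ℕ) (n : ℕ), H (res f (n + 1)) ≤ H (res f n)) ∧
  (∀ (f : ℕ → ℕ) (n : ℕ), G (res f (n + 1)) ≠ G (res f n) →
    H (res f (n + 1)) < H (res f n))

def GuessableMC (S : Set (ℕ → ℕ)) (α : Ordinal.{0}) : Prop := ∃ G H, WitnessMC S α G H

/-- An ordinal is even if it is of the form `λ + n` with `λ` limit or zero and `n` even. -/
def OrdEven (o : Ordinal.{0}) : Prop :=
  ∃ (l : Ordinal.{0}) (n : ℕ), (l = 0 ∨ Order.IsSuccLimit l) ∧ o = l + n ∧ Even n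

/-- The Hausdorff difference set `D_α((A_η)_{η<α})`. -/
def DSet (α : Ordinal.{0}) (A : Ordinal.{0} → Set (ℕ → ℕ)) : Set (ℕ → ℕ) :=
  {x | ∃ η, η < α ∧ x ∈ A η ∧ (∀ η', η' < η → x ∉ A η') ∧ (OrdEven η ↔ ¬ OrdEven α)}

/-- Membership in the class `D_α(Σ⁰₁)`. -/
def InDiff (α : Ordinal.{0}) (S : Set (ℕ → ℕ)) : Prop :=
  ∃ A : Ordinal.{0} → Set (ℕ → ℕ), (∀ η, η < α → IsOpen (A η)) ∧
    (∀ η η', η ≤ η' → η' < α → A η ⊆ A η') ∧ S = DSet α A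
/-- Wadge's `Rm_Ω(S)`: the stable value of `Rm_μ(S, Sᶜ)`. -/
noncomputable def RmInf (S : Set (ℕ → ℕ)) : Set (ℕ → ℕ) :=
  Rm S Sᶜ (sInf {μ : Ordinal.{0} | Rm S Sᶜ μ = Rm S Sᶜ (μ + 1)})

/-- The canonical guesser `G_S`. -/
noncomputable def GS (S : Set (ℕ → ℕ)) (σ : List ℕ) : Bool :=
  if (∃ f : ℕ → ℕ, res f σ.length = σ ∧ f ∈ seqsIn (SRem S (betaOf S σ - 1))) then
    decide (∃ f : ℕ → ℕ, res f σ.length = σ ∧ f ∈ seqsIn (SRem S (betaOf S σ - 1)) ∧ f ∈ S)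
  else if h : σ = [] then false
  else GS S σ.dropLast
termination_by σ.length
decreasing_by
  simp only [List.length_dropLast]
  exact Nat.sub_lt (List.length_pos_iff.mpr h) one_pos

/-- `S` is `F_σ`: a countable union of closed sets. -/
def IsFsigma (S : Set (ℕ → ℕ)) : Prop :=
  ∃ C : ℕ → Set (ℕ → ℕ), (∀ n, IsClosed (C n)) ∧ S = ⋃ n, C n

/-- Boolean combinations of open sets. -/
inductive BoolComb : Set (ℕ → ℕ) → Prop
  | isOpen {s : Set (ℕ → ℕ)} : IsOpen s → BoolComb s
  | compl {s : Set (ℕ → ℕ)} : BoolComb s → BoolComb sᶜ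
  | union {s t : Set (ℕ → ℕ)} : BoolComb s → BoolComb t → BoolComb (s ∪ t)

/-- The Borel class `Σ⁰_α` on Baire space (for `α ≥ 1`). -/
noncomputable def Sigma0 (α : Ordinal.{0}) : Set (Set (ℕ → ℕ)) :=
  if α = 1 then {s | IsOpen s}
  else {s | ∃ g : ℕ → Set (ℕ → ℕ), s = ⋃ n, g n ∧
    ∀ n, ∃ β : {β : Ordinal.{0} // β < α}, 1 ≤ β.1 ∧ (g n)ᶜ ∈ Sigma0 β.1}
termination_by α
decreasing_by exact β.2

/-- The ambiguous Borel class `Δ⁰_α`. -/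
noncomputable def Delta0 (α : Ordinal.{0}) : Set (Set (ℕ → ℕ)) :=
  {s | s ∈ Sigma0 α ∧ sᶜ ∈ Sigma0 α}

/-- The Boolean characteristic function. -/
noncomputable def chi (X : Set (ℕ → ℕ)) (f : ℕ → ℕ) : Bool := decide (f ∈ X)

/-- `G` guesses `S` based on the sequence of sets `Ss`. -/
def GuessesBased (G : List Bool → Bool) (Ss : ℕ → Set (ℕ → ℕ)) (S : Set (ℕ → ℕ)) : Prop :=
  ∀ f : ℕ → ℕ, ∀ᶠ n in atTop,
    (G (List.ofFn (fun i : Fin n => chi (Ss i) f)) = true ↔ f ∈ S)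

/-- `S` is `μ`th-order guessable. -/
def HigherGuessable (μ : Ordinal.{0}) (S : Set (ℕ → ℕ)) : Prop :=
  ∃ Ss : ℕ → Set (ℕ → ℕ), (∀ i, ∃ μi, μi < μ ∧ Ss i ∈ Delta0 (μi + 1)) ∧
    ∃ G : List Bool → Bool, GuessesBased G Ss S

lemma SRem_succ (S : Set (ℕ → ℕ)) (β : Ordinal.{0}) :
    SRem S (β + 1) = {x | x ∈ SRem S β ∧ ∃ f g : ℕ → ℕ,
      f ∈ seqsIn (SRem S β) ∧ g ∈ seqsIn (SRem S β) ∧ res f x.length = x ∧ res g x.length = x ∧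
      f ∈ S ∧ g ∉ S} := by
  rw [SRem, Ordinal.add_one_eq_succ, Ordinal.limitRecOn_succ]
  rfl

lemma SRem_limit (S : Set (ℕ → ℕ)) {o : Ordinal.{0}} (ho : Order.IsSuccLimit o) :
    SRem S o = ⋂ (β : Ordinal.{0}) (_ : β < o), SRem S β := by
  rw [SRem, Ordinal.limitRecOn_limit _ _ _ _ ho]
  rfl

lemma SRem_succ_subset (S : Set (ℕ → ℕ)) (β : Ordinal.{0}) : SRem S (β + 1) ⊆ SRem S β := by
  rw [SRem_succ]; exact fun x hx => hx.1

lemma SRem_antitone (S : Set (ℕ → ℕ)) : ∀ {β γ : Ordinal.{0}}, β ≤ γ → SRem S γ ⊆ SRem S β := by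
  intro β γ
  induction γ using Ordinal.induction with
  | h γ ih =>
    intro hβγ
    rcases eq_or_lt_of_le hβγ with rfl | hlt
    · exact subset_rfl
    rcases Ordinal.zero_or_succ_or_isSuccLimit γ with rfl | ⟨δ, rfl⟩ | hl
    · exact absurd hlt (not_lt_zero (a := β))
    · rw [← Ordinal.add_one_eq_succ] at *
      exact (SRem_succ_subset S δ).trans
        (ih δ (lt_add_one δ) (by rw [Ordinal.add_one_eq_succ] at hlt; exact Order.lt_succ_iff.mp hlt))
    · rw [SRem_limit S hl]
      exact Set.biInter_subset_of_mem hlt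

lemma stab_nonempty (S : Set (ℕ → ℕ)) : {α : Ordinal.{0} | SRem S α = SRem S (α + 1)}.Nonempty := by
  by_contra h
  rw [Set.not_nonempty_iff_eq_empty] at h
  have hstrict : StrictAnti (SRem S) := by
    intro β γ hlt
    have h1 : SRem S γ ⊆ SRem S (β + 1) := by
      apply SRem_antitone S
      rw [Ordinal.add_one_eq_succ]
      exact Order.succ_le_of_lt hlt
    have h2 : SRem S (β + 1) ⊂ SRem S β := by
      refine (SRem_succ_subset S β).ssubset_of_ne ?_
      intro he
      have hmem : β ∈ {α : Ordinal.{0} | SRem S α = SRem S (α + 1)} := by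
        show SRem S β = SRem S (β + 1)
        exact he.symm
      rw [h] at hmem
      exact hmem
    exact lt_of_le_of_lt h1 h2
  exact not_injective_of_ordinal _ hstrict.injective

lemma res_length (f : ℕ → ℕ) (n : ℕ) : (res f n).length = n := by simp [res]

lemma res_getElem (f : ℕ → ℕ) {n i : ℕ} (h : i < (res f n).length) : (res f n)[i] = f i := by
  simp [res]

lemma res_prefix (f : ℕ → ℕ) {m n : ℕ} (h : m ≤ n) : res f m <+: res f n := by
  have : res f m = (res f n).take m := by
    apply List.ext_getElem
    · simp [res, h]
    · intro i h1 h2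
      simp [res]
  rw [this]
  exact List.take_prefix _ _

lemma step_lemma {S : Set (ℕ → ℕ)} {G : List ℕ → Bool} (hG : Guesses G S)
    {T : Set (List ℕ)}
    (hT : ∀ σ ∈ T, ∃ f g : ℕ → ℕ, f ∈ seqsIn T ∧ g ∈ seqsIn T ∧
      res f σ.length = σ ∧ res g σ.length = σ ∧ f ∈ S ∧ g ∉ S)
    {σ : List ℕ} (hσ : σ ∈ T) (b : Bool) :
    ∃ τ, τ ∈ T ∧ σ <+: τ ∧ σ.length < τ.length ∧ G τ = b := by
  obtain ⟨f, g, hf, hg, hfσ, hgσ, hfS, hgS⟩ := hT σ hσ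
  cases b with
  | false =>
    obtain ⟨N, hN⟩ := eventually_atTop.mp (hG g)
    refine ⟨res g (max N (σ.length + 1)), hg _, ?_, ?_, ?_⟩
    · have hp := res_prefix g (le_trans (Nat.le_succ σ.length) (le_max_right N (σ.length + 1)))
      rwa [hgσ] at hp
    · rw [res_length]; exact lt_of_lt_of_le (Nat.lt_succ_self _) (le_max_right _ _)
    · have := hN _ (le_max_left N (σ.length + 1))
      simp [hgS] at this
      exact this
  | true =>
    obtain ⟨N, hN⟩ := eventually_atTop.mp (hG f)
    refine ⟨res f (max N (σ.length + 1)), hf _, ?_, ?_, ?_⟩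
    · have hp := res_prefix f (le_trans (Nat.le_succ σ.length) (le_max_right N (σ.length + 1)))
      rwa [hfσ] at hp
    · rw [res_length]; exact lt_of_lt_of_le (Nat.lt_succ_self _) (le_max_right _ _)
    · have := hN _ (le_max_left N (σ.length + 1))
      simp [hfS] at this
      exact this

lemma main_empty {S : Set (ℕ → ℕ)} {G : List ℕ → Bool} (hG : Guesses G S)
    {T : Set (List ℕ)}
    (hT : ∀ σ ∈ T, ∃ f g : ℕ → ℕ, f ∈ seqsIn T ∧ g ∈ seqsIn T ∧
      res f σ.length = σ ∧ res g σ.length = σ ∧ f ∈ S ∧ g ∉ S) :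
    T = ∅ := by
  by_contra hne
  obtain ⟨x, hx⟩ := Set.nonempty_iff_ne_empty.mpr hne
  have hstep : ∀ σ : {σ // σ ∈ T}, ∃ τ : {τ // τ ∈ T},
      σ.1 <+: τ.1 ∧ σ.1.length < τ.1.length ∧ G τ.1 = !(G σ.1) := by
    intro σ
    obtain ⟨τ, h1, h2, h3, h4⟩ := step_lemma hG hT σ.2 (!(G σ.1))
    exact ⟨⟨τ, h1⟩, h2, h3, h4⟩
  choose nxt h1 h2 h3 using hstep
  let seq : ℕ → {σ // σ ∈ T} := fun k => Nat.rec ⟨x, hx⟩ (fun _ p => nxt p) k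
  have hseq : ∀ k, seq (k + 1) = nxt (seq k) := fun _ => rfl
  have hchain : ∀ j k, j ≤ k → (seq j).1 <+: (seq k).1 := by
    intro j k hjk
    induction hjk with
    | refl => exact List.prefix_refl _
    | step h ih => exact ih.trans (h1 _)
  have hlen' : ∀ k, k ≤ (seq k).1.length := by
    intro k
    induction k with
    | zero => exact Nat.zero_le _
    | succ n ih => exact Nat.succ_le_of_lt (lt_of_le_of_lt ih (h2 _))
  let f : ℕ → ℕ := fun n => (seq (n + 1)).1.getD n 0
  have hres : ∀ k, res f ((seq k).1.length) = (seq k).1 := by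
    intro k
    apply List.ext_getElem (by rw [res_length])
    intro i h1i h2i
    rw [res_getElem]
    show (seq (i + 1)).1.getD i 0 = (seq k).1[i]
    have hi : i < (seq (i + 1)).1.length := lt_of_lt_of_le (Nat.lt_succ_self i) (hlen' (i + 1))
    rw [List.getD_eq_getElem _ _ hi]
    rcases le_total (i + 1) k with h | h
    · exact (hchain _ _ h).getElem hi
    · exact ((hchain _ _ h).getElem h2i).symm
  obtain ⟨N, hN⟩ := eventually_atTop.mp (hG f)
  have e1 := hN _ (le_trans (hlen' N) (le_of_eq rfl))
  have e2 := hN _ (le_trans (Nat.le_succ N) (hlen' (N + 1)))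
  rw [hres N] at e1
  rw [hres (N + 1)] at e2
  have heq : G (seq (N + 1)).1 = G (seq N).1 := by
    by_cases hf : f ∈ S
    · simp [hf] at e1 e2; rw [e1, e2]
    · simp [hf] at e1 e2; rw [e1, e2]
  rw [hseq, h3] at heq
  simp at heq

theorem stmt1 (S : Set (ℕ → ℕ)) (hS : Guessable S) :
    Sinf S = ∅ ∧ ∃ α : Ordinal.{0}, SRem S α = ∅ := by
  obtain ⟨G, hG⟩ := hS
  have hstab : alphaS S ∈ {α : Ordinal.{0} | SRem S α = SRem S (α + 1)} :=
    csInf_mem (stab_nonempty S)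
  have hT : ∀ σ ∈ SRem S (alphaS S), ∃ f g : ℕ → ℕ,
      f ∈ seqsIn (SRem S (alphaS S)) ∧ g ∈ seqsIn (SRem S (alphaS S)) ∧
      res f σ.length = σ ∧ res g σ.length = σ ∧ f ∈ S ∧ g ∉ S := by
    intro σ hσ
    have h2 : σ ∈ SRem S (alphaS S + 1) := by
      rw [← hstab]; exact hσ
    rw [SRem_succ] at h2
    exact h2.2
  have hempty : SRem S (alphaS S) = ∅ := main_empty hG hT
  exact ⟨hempty, alphaS S, hempty⟩
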